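/- Let n ≥ 1 and let A ⊆ Sⁿ be a convex subset with A ≠ Sⁿ. For every point x in the frontier of A taken in the subspace topology of Sⁿ ∩ span(A), there exists a unit vector v ∈ ℝ^{n+1} with ⟨v, x⟩ = 0 and ⟨v, a⟩ ≥ 0 for all a ∈ A; that is, the great (n−1)-sphere {y ∈ Sⁿ : ⟨v,y⟩ = 0} is a supporting hypersphere for A at x. (Theorem 2.7 of the paper.) -/

import Mathlib

open scoped RealInnerProductSpace Pointwise

noncomputable section

/-- `Esp n` is `ℝ^{n+1}` with its standard inner product. -/
abbrev Esp (n : ℕ) : Type := EuclideanSpace ℝ (Fin (n + 1))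

/-- The unit sphere `Sⁿ ⊆ ℝ^{n+1}`. -/
def sphereSet (n : ℕ) : Set (Esp n) := {x | ‖x‖ = 1}

/-- A convex segment in `Sⁿ`: `{(cos t)·u + (sin t)·v : 0 ≤ t ≤ a}` for an
orthonormal pair `u, v` and some `a ∈ [0, π]`. -/
def IsConvexSegment {n : ℕ} (S : Set (Esp n)) : Prop :=
  ∃ (u v : Esp n) (a : ℝ), ‖u‖ = 1 ∧ ‖v‖ = 1 ∧ ⟪u, v⟫ = 0 ∧
    0 ≤ a ∧ a ≤ Real.pi ∧
    S = (fun t : ℝ => Real.cos t • u + Real.sin t • v) '' Set.Icc 0 a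

/-- A subset of `Sⁿ` is convex if any two of its points are contained in a
convex segment contained in the set. -/
def SphConvex {n : ℕ} (A : Set (Esp n)) : Prop :=
  ∀ x ∈ A, ∀ y ∈ A, ∃ S : Set (Esp n), IsConvexSegment S ∧ S ⊆ A ∧ x ∈ S ∧ y ∈ S

def coneA {n : ℕ} (A : Set (Esp n)) : Set (Esp n) := {p | ∃ r : ℝ, 0 ≤ r ∧ ∃ a ∈ A, p = r • a}

lemma sector_lemma (amax α β : ℝ) (h0 : 0 < amax) (hπ : amax ≤ Real.pi)
    (hβ : 0 ≤ β) (hs : 0 ≤ α * Real.sin amax - β * Real.cos amax) :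
    ∃ ρ : ℝ, 0 ≤ ρ ∧ ∃ τ ∈ Set.Icc (0:ℝ) amax, α = ρ * Real.cos τ ∧ β = ρ * Real.sin τ := by
  set ρ := Real.sqrt (α ^ 2 + β ^ 2) with hρdef
  have hρ0 : 0 ≤ ρ := Real.sqrt_nonneg _
  rcases eq_or_lt_of_le hρ0 with hρz | hρpos
  · have h2 : α ^ 2 + β ^ 2 = 0 := by
      have h3 : α ^ 2 + β ^ 2 ≤ 0 := Real.sqrt_eq_zero'.mp hρz.symm
      nlinarith [sq_nonneg α, sq_nonneg β]
    have hα : α = 0 := by nlinarith [sq_nonneg α, sq_nonneg β]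
    have hβ' : β = 0 := by nlinarith [sq_nonneg α, sq_nonneg β]
    exact ⟨0, le_refl 0, 0, ⟨le_refl 0, h0.le⟩, by simp [hα], by simp [hβ']⟩
  · have hρsq : ρ ^ 2 = α ^ 2 + β ^ 2 := Real.sq_sqrt (by positivity)
    have hαρ : |α / ρ| ≤ 1 := by
      rw [abs_div, abs_of_pos hρpos, div_le_one hρpos]
      have : α ^ 2 ≤ ρ ^ 2 := by nlinarith
      nlinarith [abs_nonneg α, sq_abs α]
    set τ := Real.arccos (α / ρ) with hτdef
    have hcos : Real.cos τ = α / ρ := Real.cos_arccos (by linarith [abs_le.mp hαρ |>.1]) (by linarith [abs_le.mp hαρ |>.2])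
    have hsin : Real.sin τ = β / ρ := by
      rw [hτdef, Real.sin_arccos]
      have : 1 - (α / ρ) ^ 2 = (β / ρ) ^ 2 := by
        field_simp
        nlinarith
      rw [this, Real.sqrt_sq (by positivity)]
    have hτ0 : 0 ≤ τ := Real.arccos_nonneg _
    have hτπ : τ ≤ Real.pi := Real.arccos_le_pi _
    have hτa : τ ≤ amax := by
      by_contra h
      push_neg at h
      have h1 : 0 < Real.sin (τ - amax) :=
        Real.sin_pos_of_pos_of_lt_pi (by linarith) (by linarith)
      rw [Real.sin_sub] at h1
      have hα' : α = ρ * Real.cos τ := by rw [hcos]; field_simp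
      have hβ'' : β = ρ * Real.sin τ := by rw [hsin]; field_simp
      rw [hα', hβ''] at hs
      nlinarith [mul_pos hρpos h1]
    exact ⟨ρ, hρ0, τ, ⟨hτ0, hτa⟩, by rw [hcos]; field_simp, by rw [hsin]; field_simp⟩

lemma key_add {n : ℕ} {A : Set (Esp n)} (hc : SphConvex A) {a b : Esp n}
    (ha : a ∈ A) (hb : b ∈ A) {r s : ℝ} (hr : 0 ≤ r) (hs : 0 ≤ s) :
    r • a + s • b ∈ coneA A := by
  obtain ⟨S, ⟨u, w, amax, hu, hw, huw, h0a, haπ, hSeq⟩, hSA, haS, hbS⟩ := hc a ha b hb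
  subst hSeq
  obtain ⟨t₁, ht₁, ha'⟩ := haS
  obtain ⟨t₂, ht₂, hb'⟩ := hbS
  rcases eq_or_lt_of_le h0a with h0 | h0
  · -- amax = 0 : t₁ = t₂ = 0, a = b
    have e1 : t₁ = 0 := le_antisymm (h0 ▸ ht₁.2) ht₁.1
    have e2 : t₂ = 0 := le_antisymm (h0 ▸ ht₂.2) ht₂.1
    subst e1; subst e2
    have hab : a = b := by rw [← ha', ← hb']
    rw [hab, ← add_smul]
    exact ⟨r + s, by linarith, b, hb, rfl⟩
  · set α := r * Real.cos t₁ + s * Real.cos t₂ with hα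
    set β := r * Real.sin t₁ + s * Real.sin t₂ with hβ
    have ht₁π : t₁ ≤ Real.pi := le_trans ht₁.2 haπ
    have ht₂π : t₂ ≤ Real.pi := le_trans ht₂.2 haπ
    have hβ0 : 0 ≤ β := by
      have := Real.sin_nonneg_of_nonneg_of_le_pi ht₁.1 ht₁π
      have := Real.sin_nonneg_of_nonneg_of_le_pi ht₂.1 ht₂π
      positivity
    have hs0 : 0 ≤ α * Real.sin amax - β * Real.cos amax := by
      have h1 : 0 ≤ Real.sin (amax - t₁) :=
        Real.sin_nonneg_of_nonneg_of_le_pi (by linarith [ht₁.2]) (by linarith [ht₁.1])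
      have h2 : 0 ≤ Real.sin (amax - t₂) :=
        Real.sin_nonneg_of_nonneg_of_le_pi (by linarith [ht₂.2]) (by linarith [ht₂.1])
      rw [Real.sin_sub] at h1 h2
      have := mul_nonneg hr h1
      have := mul_nonneg hs h2
      rw [hα, hβ]; ring_nf; nlinarith
    obtain ⟨ρ, hρ0, τ, hτ, hατ, hβτ⟩ := sector_lemma amax α β h0 haπ hβ0 hs0
    refine ⟨ρ, hρ0, Real.cos τ • u + Real.sin τ • w, hSA ⟨τ, hτ, rfl⟩, ?_⟩
    rw [← ha', ← hb']
    rw [smul_add, smul_add, smul_smul, smul_smul, smul_smul, smul_smul]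
    rw [smul_add, smul_smul, smul_smul, ← hα] at *
    rw [show ρ * Real.cos τ = α from hατ.symm, show ρ * Real.sin τ = β from hβτ.symm, hα, hβ]
    rw [add_smul, add_smul]
    abel

lemma coneA_convex {n : ℕ} {A : Set (Esp n)} (hc : SphConvex A) :
    Convex ℝ (coneA A) := by
  intro p hp q hq lam mu hlam hmu hsum
  obtain ⟨r, hr, a, ha, rfl⟩ := hp
  obtain ⟨s, hs, b, hb, rfl⟩ := hq
  have : lam • r • a + mu • s • b = (lam * r) • a + (mu * s) • b := by
    rw [smul_smul, smul_smul]
  rw [this]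
  exact key_add hc ha hb (mul_nonneg hlam hr) (mul_nonneg hmu hs)

/-- Theorem 2.7 (supporting hyperspheres): for a convex subset `A ≠ Sⁿ` of
`Sⁿ` and a point `x` of the frontier of `A` in the subspace topology of
`Sⁿ ∩ span(A)`, there exists a supporting great hypersphere for `A` at `x`,
i.e. a unit vector `v` with `⟨v, x⟩ = 0` and `⟨v, a⟩ ≥ 0` for all `a ∈ A`. -/
theorem sphConvex_supporting_hypersphere (n : ℕ) (hn : 1 ≤ n)
    (A : Set (Esp n)) (hA : A ⊆ sphereSet n) (hc : SphConvex A)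
    (hne : A ≠ sphereSet n) (x : Esp n)
    (hxT : x ∈ sphereSet n ∩ (Submodule.span ℝ A : Set (Esp n)))
    (hx : (⟨x, hxT⟩ : ↥(sphereSet n ∩ (Submodule.span ℝ A : Set (Esp n)))) ∈
      frontier (Subtype.val ⁻¹' A :
        Set ↥(sphereSet n ∩ (Submodule.span ℝ A : Set (Esp n))))) :
    ∃ v : Esp n, ‖v‖ = 1 ∧ ⟪v, x⟫ = 0 ∧ ∀ a ∈ A, 0 ≤ ⟪v, a⟫ := by
  classical
  set V : Submodule ℝ (Esp n) := Submodule.span ℝ A with hV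
  -- A is nonempty
  have hAne : A.Nonempty := by
    rcases Set.eq_empty_or_nonempty A with h | h
    · exfalso
      have : x ∈ (Submodule.span ℝ (∅ : Set (Esp n)) : Set (Esp n)) := by
        rw [← h]; exact hxT.2
      rw [Submodule.span_empty] at this
      simp only [Submodule.bot_coe, Set.mem_singleton_iff] at this
      have hx1 : ‖x‖ = 1 := hxT.1
      rw [this] at hx1; simp at hx1
    · exact h
  set C : Set (Esp n) := coneA A with hC
  have hCV : C ⊆ (V : Set (Esp n)) := by
    rintro p ⟨r, hr, a, ha, rfl⟩
    exact Submodule.smul_mem _ _ (Submodule.subset_span ha)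
  have hAC : A ⊆ C := fun a ha => ⟨1, zero_le_one, a, ha, (one_smul ℝ a).symm⟩
  have h0C : (0 : Esp n) ∈ C := ⟨0, le_refl 0, hAne.choose, hAne.choose_spec, (zero_smul ℝ _).symm⟩
  have hCcone : ∀ r : ℝ, 0 ≤ r → ∀ p ∈ C, r • p ∈ C := by
    rintro r hr p ⟨s, hs, a, ha, rfl⟩
    exact ⟨r * s, mul_nonneg hr hs, a, ha, (smul_smul r s a)⟩
  set D : Set (Esp n) := C + (Vᗮ : Set (Esp n)) with hD
  have hDconv : Convex ℝ D := (coneA_convex hc).add (Vᗮ.convex)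
  have hDcone : ∀ r : ℝ, 0 ≤ r → ∀ p ∈ D, r • p ∈ D := by
    rintro r hr p hp
    rw [Set.mem_add] at hp
    obtain ⟨c, hcC, z, hz, rfl⟩ := hp
    rw [smul_add]
    exact Set.add_mem_add (hCcone r hr c hcC) (Submodule.smul_mem _ _ hz)
  have h0D : (0 : Esp n) ∈ D := by
    rw [show (0 : Esp n) = 0 + 0 by simp]
    exact Set.add_mem_add h0C (Submodule.zero_mem _)
  have hCD : C ⊆ D := fun c hcC => by
    rw [show c = c + 0 by simp]
    exact Set.add_mem_add hcC (Submodule.zero_mem _)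
  have hOD : (Vᗮ : Set (Esp n)) ⊆ D := fun z hz => by
    rw [show z = 0 + z by simp]
    exact Set.add_mem_add h0C hz
  -- the affine span of D is everything
  have hspanD : Submodule.span ℝ D = ⊤ := by
    rw [eq_top_iff, ← Submodule.sup_orthogonal_of_hasOrthogonalProjection (K := V)]
    apply sup_le
    · rw [hV]
      exact Submodule.span_le.mpr (fun a ha => Submodule.subset_span (hCD (hAC ha)))
    · exact fun z hz => Submodule.subset_span (hOD hz)
  have haffD : affineSpan ℝ D = ⊤ := by
    rw [AffineSubspace.affineSpan_eq_top_iff_vectorSpan_eq_top_of_nonempty ℝ (Esp n) (Esp n) ⟨0, h0D⟩]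
    rw [eq_top_iff, ← hspanD]
    apply Submodule.span_le.mpr
    intro d hd
    have : d -ᵥ 0 ∈ vectorSpan ℝ D := vsub_mem_vectorSpan ℝ hd h0D
    simpa using this
  have hintD : (interior D).Nonempty :=
    (hDconv.interior_nonempty_iff_affineSpan_eq_top).mpr haffD
  -- x is not in the interior of D
  have hxint : x ∉ interior D := by
    intro hmem
    rw [mem_interior_iff_mem_nhds, Metric.mem_nhds_iff] at hmem
    obtain ⟨ε, hε, hball⟩ := hmem
    have hsub : (Subtype.val ⁻¹' (Metric.ball x ε) : Set ↥(sphereSet n ∩ (V : Set (Esp n)))) ⊆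
        Subtype.val ⁻¹' A := by
      rintro ⟨y, hyT⟩ hy
      have hyD : y ∈ D := hball hy
      rw [Set.mem_add] at hyD
      obtain ⟨c, hcC, z, hz, hyzc⟩ := hyD
      have hzV : z ∈ V := by
        have : z = y + -c := by rw [← hyzc]; abel
        rw [this]
        exact Submodule.add_mem _ hyT.2 (Submodule.neg_mem _ (hCV hcC))
      have hz0 : z = 0 := by
        have := (Submodule.orthogonal_disjoint V).le_bot ⟨hzV, hz⟩
        simpa using this
      have hyc : y = c := by rw [← hyzc, hz0, add_zero]
      obtain ⟨r, hr, a, ha, hcra⟩ := hcC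
      have hnorm : ‖y‖ = 1 := hyT.1
      have ha1 : ‖a‖ = 1 := hA ha
      have hra : ‖r • a‖ = r := by
        rw [norm_smul, ha1, Real.norm_eq_abs, abs_of_nonneg hr, mul_one]
      have hr1 : r = 1 := by rw [← hra, ← hcra, ← hyc]; exact hnorm
      show y ∈ A
      rw [hyc, hcra, hr1, one_smul]; exact ha
    have hxIntA : (⟨x, hxT⟩ : ↥(sphereSet n ∩ (V : Set (Esp n)))) ∈
        interior (Subtype.val ⁻¹' A : Set ↥(sphereSet n ∩ (V : Set (Esp n)))) := by
      refine interior_maximal hsub (Metric.isOpen_ball.preimage continuous_subtype_val) ?_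
      show x ∈ Metric.ball x ε
      simpa using hε
    rw [frontier_eq_closure_inter_closure, closure_compl] at hx
    exact hx.2 hxIntA
  -- Hahn–Banach separation
  obtain ⟨f, hf⟩ := geometric_hahn_banach_open_point (hDconv.interior) isOpen_interior hxint
  obtain ⟨w₀, hw₀⟩ := hintD
  -- f ≤ 0 on D
  have hfD : ∀ d ∈ D, f d ≤ 0 := by
    intro d hd
    by_contra h
    push_neg at h
    obtain ⟨k, hk⟩ := exists_nat_gt ((2 * f x - f w₀) / f d)
    have hkd : 2 * f x - f w₀ < (k : ℝ) * f d := (div_lt_iff₀ h).mp hk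
    have hmem : (1/2 : ℝ) • w₀ + (1/2 : ℝ) • ((k : ℝ) • d) ∈ interior D :=
      hDconv.combo_interior_closure_mem_interior hw₀
        (subset_closure (hDcone k (Nat.cast_nonneg k) d hd)) (by norm_num) (by norm_num)
        (by norm_num)
    have := hf _ hmem
    simp only [map_add, map_smul, smul_eq_mul] at this
    linarith
  -- x ∈ closure D
  have hxclD : x ∈ closure D := by
    have h1 : (⟨x, hxT⟩ : ↥(sphereSet n ∩ (V : Set (Esp n)))) ∈
        closure (Subtype.val ⁻¹' A : Set ↥(sphereSet n ∩ (V : Set (Esp n)))) :=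
      frontier_subset_closure hx
    have h2 : x ∈ closure A := by
      have := (continuous_subtype_val.closure_preimage_subset A) h1
      exact this
    exact closure_mono (fun a ha => hCD (hAC ha)) h2
  -- f x ≤ 0
  have hfx_le : f x ≤ 0 := by
    have hclosed : closure D ⊆ {y | f y ≤ 0} :=
      closure_minimal hfD (isClosed_le (f.continuous) continuous_const)
    exact hclosed hxclD
  -- f x ≥ 0 via scaling trick
  have hfx_ge : 0 ≤ f x := by
    have hstep : ∀ t : ℝ, 0 < t → t ≤ 1 → t * f w₀ < f x := by
      intro t ht ht1
      have hmem : t • w₀ + (1 - t) • (0 : Esp n) ∈ interior D :=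
        hDconv.combo_interior_closure_mem_interior hw₀ (subset_closure h0D) ht
          (by linarith) (by ring)
      have := hf _ hmem
      simpa using this
    have htend : Filter.Tendsto (fun k : ℕ => (1 / ((k : ℝ) + 1)) * f w₀)
        Filter.atTop (nhds 0) := by
      have := tendsto_one_div_add_atTop_nhds_zero_nat.mul_const (f w₀)
      simpa using this
    refine le_of_tendsto htend (Filter.Eventually.of_forall fun k => ?_)
    exact (hstep (1 / ((k : ℝ) + 1)) (by positivity)
      (by rw [div_le_one (by positivity)]; linarith [Nat.cast_nonneg (α := ℝ) k])).le
  have hfx : f x = 0 := le_antisymm hfx_le hfx_ge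
  -- f is represented by a nonzero vector
  set v₀ : Esp n := (InnerProductSpace.toDual ℝ (Esp n)).symm f with hv₀
  have hv₀app : ∀ y : Esp n, ⟪v₀, y⟫ = f y := fun y => InnerProductSpace.toDual_symm_apply
  have hw₀neg : f w₀ < f x := hf _ hw₀
  have hv₀ne : v₀ ≠ 0 := by
    intro h
    have := hv₀app w₀
    rw [h, inner_zero_left] at this
    rw [← this] at hw₀neg
    rw [hfx] at hw₀neg
    exact absurd hw₀neg (lt_irrefl 0)
  have hv₀norm : (0:ℝ) < ‖v₀‖ := norm_pos_iff.mpr hv₀ne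
  refine ⟨(‖v₀‖⁻¹ : ℝ) • (-v₀), ?_, ?_, ?_⟩
  · rw [norm_smul, norm_neg, Real.norm_eq_abs, abs_of_pos (by positivity)]
    field_simp
  · rw [real_inner_smul_left, inner_neg_left, hv₀app, hfx]
    ring
  · intro a ha
    rw [real_inner_smul_left, inner_neg_left, hv₀app]
    have : f a ≤ 0 := hfD a (hCD (hAC ha))
    have h1 : 0 ≤ -f a := by linarith
    positivity
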